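/- (Lemma 4) For all f, g ∈ ℝ^m, ⟨f, Lg⟩ = (1/8) Σ_{i,j,k,l} A^{ij}_{kl} (M_i M_j + M_k M_l) (f_i* + f_j* − f_k* − f_l*)(g_i* + g_j* − g_k* − g_l*), where f_i* = f_i/√(α_i M_i) and g_i* = g_i/√(α_i M_i). -/

import Mathlib

open Finset

/-- The discrete Boltzmann collision operator `Q`.
`A i j k l` stands for the transition rate `A^{ij}_{kl}`. -/
noncomputable def Qop {m : ℕ} (α : Fin m → ℝ) (A : Fin m → Fin m → Fin m → Fin m → ℝ)
    (F G : Fin m → ℝ) : Fin m → ℝ := fun i =>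
  (1 / (2 * α i)) *
    ∑ j, ∑ k, ∑ l,
      (A i j k l * (F k * G l + F l * G k) - A k l i j * (F i * G j + F j * G i))

/-- `φ` is a summational invariant. -/
def SummInv {m : ℕ} (α : Fin m → ℝ) (A : Fin m → Fin m → Fin m → Fin m → ℝ)
    (φ : Fin m → ℝ) : Prop :=
  ∀ i j k l, A i j k l * (φ i / α i + φ j / α j - φ k / α k - φ l / α l) = 0

/-- Multiplication by `Λ^{1/2}`, where `Λ = diag (M i / α i)`. -/
noncomputable def sqrtLam {m : ℕ} (α M : Fin m → ℝ) (f : Fin m → ℝ) : Fin m → ℝ :=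
  fun i => Real.sqrt (M i / α i) * f i

/-- Multiplication by `Λ^{-1/2}`, where `Λ = diag (M i / α i)`. -/
noncomputable def invSqrtLam {m : ℕ} (α M : Fin m → ℝ) (f : Fin m → ℝ) : Fin m → ℝ :=
  fun i => (Real.sqrt (M i / α i))⁻¹ * f i

/-- The linearized collision operator `L f = -2 Λ^{-1/2} Q (M, Λ^{1/2} f)`. -/
noncomputable def Lop {m : ℕ} (α : Fin m → ℝ) (A : Fin m → Fin m → Fin m → Fin m → ℝ)
    (M : Fin m → ℝ) (f : Fin m → ℝ) : Fin m → ℝ :=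
  (-2 : ℝ) • invSqrtLam α M (Qop α A M (sqrtLam α M f))

/-- The quadratic operator `Γ (f, g) = Λ^{-1/2} Q (Λ^{1/2} f, Λ^{1/2} g)`. -/
noncomputable def Gam {m : ℕ} (α : Fin m → ℝ) (A : Fin m → Fin m → Fin m → Fin m → ℝ)
    (M : Fin m → ℝ) (f g : Fin m → ℝ) : Fin m → ℝ :=
  invSqrtLam α M (Qop α A (sqrtLam α M f) (sqrtLam α M g))

/-- Lemma 4: `⟨f, Lg⟩ = (1/8) Σ_{ijkl} A^{ij}_{kl} (M_i M_j + M_k M_l)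
(f_i* + f_j* − f_k* − f_l*)(g_i* + g_j* − g_k* − g_l*)` where `f_i* = f_i/√(α_i M_i)`. -/
private lemma sum4_pair_swap {m : ℕ} (U : Fin m → Fin m → Fin m → Fin m → ℝ) :
    ∑ i, ∑ j, ∑ k, ∑ l, U i j k l = ∑ i, ∑ j, ∑ k, ∑ l, U k l i j := by
  have h : ∀ (V : Fin m → Fin m → Fin m → Fin m → ℝ),
      ∑ i, ∑ j, ∑ k, ∑ l, V i j k l
        = ∑ p : Fin m × Fin m, ∑ q : Fin m × Fin m, V p.1 p.2 q.1 q.2 := by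
    intro V
    rw [← Fintype.sum_prod_type']
    exact Finset.sum_congr rfl fun p _ => (Fintype.sum_prod_type' _).symm
  rw [h, h, Finset.sum_comm]

private lemma sum4_add {m : ℕ} (a b c d : Fin m → Fin m → Fin m → Fin m → ℝ) :
    ∑ i, ∑ j, ∑ k, ∑ l, (a i j k l + b i j k l + c i j k l + d i j k l)
      = (∑ i, ∑ j, ∑ k, ∑ l, a i j k l) + (∑ i, ∑ j, ∑ k, ∑ l, b i j k l)
        + (∑ i, ∑ j, ∑ k, ∑ l, c i j k l) + (∑ i, ∑ j, ∑ k, ∑ l, d i j k l) := by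
  simp only [Finset.sum_add_distrib]

private lemma sum4_two_mul {m : ℕ} (a : Fin m → Fin m → Fin m → Fin m → ℝ) :
    ∑ i, ∑ j, ∑ k, ∑ l, 2 * a i j k l = 2 * ∑ i, ∑ j, ∑ k, ∑ l, a i j k l := by
  simp only [← Finset.mul_sum]

private lemma scalar_key (a m1 m2 m3 m4 s1 s2 s3 s4 a1 f1 g1 g2 g3 g4 : ℝ)
    (hs1 : s1 ≠ 0) (hs2 : s2 ≠ 0) (hs3 : s3 ≠ 0) (hs4 : s4 ≠ 0)
    (hm1 : m1 ≠ 0) (ha1 : a1 ≠ 0)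
    (e1 : s1 * s1 = a1 * m1)
    (hMax : a * (m1 * m2 - m3 * m4) = 0) :
    f1 * (-2 * ((m1 / s1)⁻¹ * (1 / (2 * a1) *
      (a * (m3 * (m4 / s4 * g4) + m4 * (m3 / s3 * g3))
        - a * (m1 * (m2 / s2 * g2) + m2 * (m1 / s1 * g1))))))
    = a * ((m1 * m2 + m3 * m4) / 2) *
        (f1 / s1 * (g1 / s1 + g2 / s2 - g3 / s3 - g4 / s4)) := by
  field_simp
  linear_combination
    (2*f1*s1^2*(s1*s2*(g4*s3 + s4*g3)) + f1*m1*a1*(s3*s4*(s1*g2 + s2*g1) - s1*s2*(g4*s3 + s4*g3))) * hMax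
    + (2*f1*a*m1*m2*(s3*s4*(s1*g2 + s2*g1) - s1*s2*(g4*s3 + s4*g3))) * e1
theorem inner_Lop_eq {m : ℕ} (hm : 1 ≤ m)
    (α : Fin m → ℝ) (hα : ∀ i, 0 < α i)
    (A : Fin m → Fin m → Fin m → Fin m → ℝ) (hA : ∀ i j k l, 0 ≤ A i j k l)
    (hsym1 : ∀ i j k l, A i j l k = A i j k l)
    (hsym2 : ∀ i j k l, A j i k l = A i j k l)
    (hsym3 : ∀ i j k l, A k l i j = A i j k l)
    (M : Fin m → ℝ) (hM : ∀ i, 0 < M i)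
    (hMax : ∀ i j k l, A i j k l * (M i * M j - M k * M l) = 0)
    (f g : Fin m → ℝ) :
    ∑ i, f i * Lop α A M g i =
      (1 / 8) * ∑ i, ∑ j, ∑ k, ∑ l,
        A i j k l * (M i * M j + M k * M l) *
          ((f i / Real.sqrt (α i * M i) + f j / Real.sqrt (α j * M j)
              - f k / Real.sqrt (α k * M k) - f l / Real.sqrt (α l * M l)) *
           (g i / Real.sqrt (α i * M i) + g j / Real.sqrt (α j * M j)
              - g k / Real.sqrt (α k * M k) - g l / Real.sqrt (α l * M l))) := by
  set sa : Fin m → ℝ := fun i => Real.sqrt (α i * M i) with hsa_def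
  have hsa_pos : ∀ i, 0 < sa i := fun i => Real.sqrt_pos.2 (mul_pos (hα i) (hM i))
  have hsa_ne : ∀ i, sa i ≠ 0 := fun i => (hsa_pos i).ne'
  have hsq : ∀ i, sa i * sa i = α i * M i := fun i =>
    Real.mul_self_sqrt (mul_pos (hα i) (hM i)).le
  have hsqrt_div : ∀ i, Real.sqrt (M i / α i) = M i / sa i := by
    intro i
    rw [eq_div_iff (hsa_ne i)]
    rw [show sa i = Real.sqrt (α i * M i) from rfl,
      ← Real.sqrt_mul (div_nonneg (hM i).le (hα i).le),
      show M i / α i * (α i * M i) = (M i) ^ 2 from by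
        field_simp [(hα i).ne']]
    exact Real.sqrt_sq (hM i).le
  have hre : ∀ x, Real.sqrt (α x * M x) = sa x := fun x => by rw [hsa_def]
  clear_value sa
  simp only [hre]
  set T : Fin m → Fin m → Fin m → Fin m → ℝ := fun i j k l =>
    A i j k l * ((M i * M j + M k * M l) / 2) *
      (f i / sa i * (g i / sa i + g j / sa j - g k / sa k - g l / sa l)) with hT_def
  clear_value T
  -- Step 1: pointwise identity for f i * (L g) i
  have key : ∀ i, f i * Lop α A M g i = ∑ j, ∑ k, ∑ l, T i j k l := by
    intro i
    simp only [Lop, invSqrtLam, Qop, sqrtLam, Pi.smul_apply, smul_eq_mul, hsqrt_div,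
      Finset.mul_sum]
    refine Finset.sum_congr rfl fun j _ => Finset.sum_congr rfl fun k _ =>
      Finset.sum_congr rfl fun l _ => ?_
    rw [hsym3 i j k l]
    simp only [hT_def]
    exact scalar_key (A i j k l) (M i) (M j) (M k) (M l) (sa i) (sa j) (sa k) (sa l)
      (α i) (f i) (g i) (g j) (g k) (g l) (hsa_ne i) (hsa_ne j) (hsa_ne k) (hsa_ne l)
      (hM i).ne' (hα i).ne' (hsq i) (hMax i j k l)
  have hS : ∑ i, f i * Lop α A M g i = ∑ i, ∑ j, ∑ k, ∑ l, T i j k l :=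
    Finset.sum_congr rfl fun i _ => key i
  have h2 : (∑ i, ∑ j, ∑ k, ∑ l, T i j k l) = ∑ i, ∑ j, ∑ k, ∑ l, T j i k l :=
    Finset.sum_comm
  have h3 : (∑ i, ∑ j, ∑ k, ∑ l, T i j k l) = ∑ i, ∑ j, ∑ k, ∑ l, T k l i j :=
    sum4_pair_swap T
  have h4 : (∑ i, ∑ j, ∑ k, ∑ l, T i j k l) = ∑ i, ∑ j, ∑ k, ∑ l, T l k i j :=
    (Finset.sum_comm.trans (sum4_pair_swap (fun a b c d => T b a c d)) :)
  -- pointwise: the big summand equals twice the sum of the four reindexed T's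
  have hpt : ∀ i j k l,
      A i j k l * (M i * M j + M k * M l) *
        ((f i / sa i + f j / sa j - f k / sa k - f l / sa l) *
         (g i / sa i + g j / sa j - g k / sa k - g l / sa l))
      = 2 * (T i j k l + T j i k l + T k l i j + T l k i j) := by
    intro i j k l
    simp only [hT_def]
    rw [hsym2 i j k l, hsym3 i j k l,
      show A l k i j = A i j k l from (hsym2 l k i j).symm.trans (hsym3 i j k l)]
    ring
  have hBig : (∑ i, ∑ j, ∑ k, ∑ l,
      A i j k l * (M i * M j + M k * M l) *
        ((f i / sa i + f j / sa j - f k / sa k - f l / sa l) *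
         (g i / sa i + g j / sa j - g k / sa k - g l / sa l)))
      = 8 * ∑ i, ∑ j, ∑ k, ∑ l, T i j k l := by
    calc (∑ i, ∑ j, ∑ k, ∑ l,
        A i j k l * (M i * M j + M k * M l) *
          ((f i / sa i + f j / sa j - f k / sa k - f l / sa l) *
           (g i / sa i + g j / sa j - g k / sa k - g l / sa l)))
        = ∑ i, ∑ j, ∑ k, ∑ l, 2 * (T i j k l + T j i k l + T k l i j + T l k i j) := by
          refine Finset.sum_congr rfl fun i _ => Finset.sum_congr rfl fun j _ =>
            Finset.sum_congr rfl fun k _ => Finset.sum_congr rfl fun l _ => hpt i j k l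
      _ = 2 * ∑ i, ∑ j, ∑ k, ∑ l, (T i j k l + T j i k l + T k l i j + T l k i j) :=
          sum4_two_mul _
      _ = 2 * ((∑ i, ∑ j, ∑ k, ∑ l, T i j k l) + (∑ i, ∑ j, ∑ k, ∑ l, T j i k l)
            + (∑ i, ∑ j, ∑ k, ∑ l, T k l i j) + (∑ i, ∑ j, ∑ k, ∑ l, T l k i j)) := by
          rw [sum4_add]
      _ = 8 * ∑ i, ∑ j, ∑ k, ∑ l, T i j k l := by rw [← h2, ← h3, ← h4]; ring
  rw [hS, hBig]; ring
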